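/- No deterministic online algorithm for matching divisible items achieves α-CPROP for any α > 1 − 1/e. -/

import Mathlib

open Finset

noncomputable section

variable {A : Type*} [Fintype A] [DecidableEq A] {k : ℕ}

/-- The set of agents that like the item arriving at step `t`. -/
def likersAt (L : List (Finset A)) (t : ℕ) : Finset A := L.getD t ∅

/-- The agents of class `i`. -/
def classAgents (classOf : A → Fin k) (i : Fin k) : Finset A :=
  Finset.univ.filter fun a => classOf a = i

/-- A deterministic online algorithm for divisible items: given the liker sets of
previously arrived items and the liker set of the current item, it outputs the
fraction of the current item given to each agent. -/
abbrev FracAlg (A : Type*) := List (Finset A) → Finset A → (A → ℝ)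

/-- The fraction of item `t` given to each agent when `Alg` runs on instance `L`. -/
def fracAt (Alg : FracAlg A) (L : List (Finset A)) (t : ℕ) : A → ℝ :=
  Alg (L.take t) (likersAt L t)

/-- Validity of a fractional online algorithm: nonnegative fractions supported on
likers, each item split to total at most 1, and each agent's capacity never
exceeded on any instance. -/
def ValidFrac (Alg : FracAlg A) : Prop :=
  (∀ h cur a, 0 ≤ Alg h cur a) ∧
  (∀ (h : List (Finset A)) (cur : Finset A) a, Alg h cur a ≠ 0 → a ∈ cur) ∧
  (∀ (h : List (Finset A)) (cur : Finset A), ∑ a, Alg h cur a ≤ 1) ∧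
  (∀ (L : List (Finset A)) a, ∑ t ∈ Finset.range L.length, fracAt Alg L t a ≤ 1)

/-- The utilitarian social welfare of the fractional matching produced on `L`. -/
def uswFrac (Alg : FracAlg A) (L : List (Finset A)) : ℝ :=
  ∑ t ∈ Finset.range L.length, ∑ a, fracAt Alg L t a

/-- The value obtained by class `i` on instance `L`. -/
def classValue (classOf : A → Fin k) (Alg : FracAlg A) (L : List (Finset A))
    (i : Fin k) : ℝ :=
  ∑ t ∈ Finset.range L.length, ∑ a ∈ classAgents classOf i, fracAt Alg L t a

/-- The fractional bundle of class `j`: the fraction of each item given to `j`. -/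
def bundleOf (classOf : A → Fin k) (Alg : FracAlg A) (L : List (Finset A))
    (j : Fin k) : ℕ → ℝ :=
  fun t => ∑ a ∈ classAgents classOf j, fracAt Alg L t a

/-- Optimistic fractional valuation `V*` of the class with agents `C` for an item
bundle `y`: the LP value of the best fractional matching of `y` to `C`. -/
def VstarFrac (L : List (Finset A)) (C : Finset A) (y : ℕ → ℝ) : ℝ :=
  sSup {v : ℝ | ∃ x : ℕ → A → ℝ,
    (∀ t a, 0 ≤ x t a) ∧
    (∀ t a, x t a ≠ 0 → a ∈ C ∧ a ∈ likersAt L t ∧ t < L.length) ∧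
    (∀ t, ∑ a ∈ C, x t a ≤ y t) ∧
    (∀ a, ∑ t ∈ Finset.range L.length, x t a ≤ 1) ∧
    v = ∑ t ∈ Finset.range L.length, ∑ a ∈ C, x t a}

/-- Non-wastefulness for divisible items: in the final matching there is no pair of
a liked item that is not fully assigned and an unsaturated agent liking it. -/
def NonWastefulFrac (Alg : FracAlg A) : Prop :=
  ∀ (L : List (Finset A)), ∀ t < L.length, ∀ a ∈ likersAt L t,
    (∑ a', fracAt Alg L t a') = 1 ∨
    (∑ t' ∈ Finset.range L.length, fracAt Alg L t' a) = 1

/-- `Alg` is `α`-CEF on every instance. -/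
def IsCEFfrac (classOf : A → Fin k) (α : ℝ) (Alg : FracAlg A) : Prop :=
  ∀ (L : List (Finset A)) (i j : Fin k),
    classValue classOf Alg L i ≥
      α * VstarFrac L (classAgents classOf i) (bundleOf classOf Alg L j)

/-- The proportional share of class `i`: the best over fractional matchings `x` of
all items to all agents of the worst value `V*ᵢ(Yⱼ(x))` over classes `j`. -/
def propShare (classOf : A → Fin k) (L : List (Finset A)) (i : Fin k) : ℝ :=
  sSup {v : ℝ | ∃ x : ℕ → A → ℝ,
    (∀ t a, 0 ≤ x t a) ∧
    (∀ t a, x t a ≠ 0 → a ∈ likersAt L t ∧ t < L.length) ∧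
    (∀ t, ∑ a, x t a ≤ 1) ∧
    (∀ a, ∑ t ∈ Finset.range L.length, x t a ≤ 1) ∧
    ∀ j : Fin k, v ≤ VstarFrac L (classAgents classOf i)
      (fun t => ∑ a ∈ classAgents classOf j, x t a)}

/-- `Alg` is `α`-CPROP on every instance. -/
def IsCPROPfrac (classOf : A → Fin k) (α : ℝ) (Alg : FracAlg A) : Prop :=
  ∀ (L : List (Finset A)) (i : Fin k),
    classValue classOf Alg L i ≥ α * propShare classOf L i


section Adv

variable {N : ℕ}

def amin (s : Finset (Fin (N+1))) (f : Fin (N+1) → ℝ) : Fin (N+1) :=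
  if h : s.Nonempty then (s.exists_min_image f h).choose else 0

lemma amin_spec {s : Finset (Fin (N+1))} {f : Fin (N+1) → ℝ} (h : s.Nonempty) :
    amin s f ∈ s ∧ ∀ b ∈ s, f (amin s f) ≤ f b := by
  unfold amin
  rw [dif_pos h]
  obtain ⟨h1, h2⟩ := (s.exists_min_image f h).choose_spec
  exact ⟨h1, h2⟩

variable (B : FracAlg (Fin (N+1)))

def pickFrom (P : List (Finset (Fin (N+1)))) : Fin (N+1) :=
  amin (likersAt P (P.length - 1)) (fun a => ∑ s ∈ Finset.range P.length, fracAt B P s a)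

def nextSet (P : List (Finset (Fin (N+1)))) : Finset (Fin (N+1)) :=
  if P = [] then Finset.univ else likersAt P (P.length - 1) \ {pickFrom B P}

def build : ℕ → List (Finset (Fin (N+1)))
  | 0 => []
  | t+1 => build t ++ [nextSet B (build t)]

def S (t : ℕ) : Finset (Fin (N+1)) := nextSet B (build B t)

def ag (t : ℕ) : Fin (N+1) := pickFrom B (build B (t+1))

lemma build_len (t : ℕ) : (build B t).length = t := by
  induction t with
  | zero => rfl
  | succ t ih => simp [build, ih]

lemma build_succ (t : ℕ) : build B (t+1) = build B t ++ [S B t] := rfl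

lemma likers_build {t T : ℕ} (h : t < T) : likersAt (build B T) t = S B t := by
  induction T with
  | zero => omega
  | succ T ih =>
    rw [build_succ]
    rcases Nat.lt_succ_iff_lt_or_eq.mp h with h' | h'
    · unfold likersAt
      rw [List.getD_append _ _ _ _ (by rw [build_len]; exact h')]
      exact ih h'
    · subst h'
      unfold likersAt
      rw [List.getD_eq_getElem?_getD, List.getElem?_append_right (by simp [build_len])]
      simp [build_len]

lemma build_take {s : ℕ} : ∀ {t : ℕ}, s ≤ t → (build B t).take s = build B s := by
  intro t
  induction t with
  | zero => intro h; rw [Nat.le_zero.mp h]; rfl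
  | succ t ih =>
    intro h
    rcases Nat.lt_succ_iff_lt_or_eq.mp (Nat.lt_succ_of_le h) with h' | h'
    · rw [build_succ, List.take_append_of_le_length (by rw [build_len]; omega)]
      exact ih (by omega)
    · subst h'
      simpa [build_len] using List.take_length (build B (t+1))

lemma frac_eq {t T : ℕ} (h : t < T) :
    fracAt B (build B T) t = B (build B t) (S B t) := by
  unfold fracAt
  rw [build_take B (le_of_lt h), likers_build B h]

def lev (t : ℕ) (a : Fin (N+1)) : ℝ := ∑ s ∈ Finset.range (t+1), B (build B s) (S B s) a

lemma S_zero : S B 0 = Finset.univ := by simp [S, nextSet, build]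

lemma S_succ (t : ℕ) : S B (t+1) = S B t \ {ag B t} := by
  have hne : build B (t+1) ≠ [] := by
    intro h
    have := build_len B (t+1)
    rw [h] at this
    simp at this
  unfold S nextSet
  rw [if_neg hne]
  congr 1
  · rw [build_len]
    simpa [S, nextSet] using likers_build B (Nat.lt_succ_self t)

lemma ag_spec {t : ℕ} (h : (S B t).Nonempty) :
    ag B t ∈ S B t ∧ ∀ b ∈ S B t, lev B t (ag B t) ≤ lev B t b := by
  have hfun : (fun a => ∑ s ∈ Finset.range (build B (t+1)).length, fracAt B (build B (t+1)) s a)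
      = lev B t := by
    funext a
    rw [build_len]
    exact Finset.sum_congr rfl (fun s hs => by
      rw [frac_eq B (Finset.mem_range.mp hs)])
  have hset : likersAt (build B (t+1)) ((build B (t+1)).length - 1) = S B t := by
    rw [build_len]
    simpa using likers_build B (Nat.lt_succ_self t)
  unfold ag pickFrom
  rw [hset, hfun]
  exact amin_spec h

lemma card_S : ∀ t ≤ N+1, (S B t).card = N+1 - t := by
  intro t
  induction t with
  | zero => intro _; rw [S_zero]; simp
  | succ t ih =>
    intro h
    have ht : t ≤ N+1 := by omega
    have hc := ih ht
    have hne : (S B t).Nonempty := Finset.card_pos.mp (by omega)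
    have hmem := (ag_spec B hne).1
    rw [S_succ, Finset.card_sdiff_of_subset (Finset.singleton_subset_iff.mpr hmem), hc]
    simp; omega

lemma S_nonempty {t : ℕ} (h : t < N+1) : (S B t).Nonempty :=
  Finset.card_pos.mp (by rw [card_S B t (by omega)]; omega)

lemma S_mono {s : ℕ} : ∀ {t : ℕ}, s ≤ t → S B t ⊆ S B s := by
  intro t
  induction t with
  | zero => intro h; rw [Nat.le_zero.mp h]
  | succ t ih =>
    intro h
    rcases Nat.lt_succ_iff_lt_or_eq.mp (Nat.lt_succ_of_le h) with h' | h'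
    · rw [S_succ]; exact Finset.sdiff_subset.trans (ih (by omega))
    · subst h'; exact Finset.Subset.refl _

lemma ag_mem {t : ℕ} (h : t < N+1) : ag B t ∈ S B t := (ag_spec B (S_nonempty B h)).1

lemma ag_not_mem {s t : ℕ} (h : s < t) : ag B s ∉ S B t := by
  intro hmem
  have h1 : ag B s ∈ S B (s+1) := S_mono B (by omega) hmem
  rw [S_succ] at h1
  simp at h1

lemma ag_inj {s t : ℕ} (h : s < t) (ht : t < N+1) : ag B s ≠ ag B t := by
  intro he
  exact ag_not_mem B h (he ▸ ag_mem B ht)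

end Adv

section Analysis

variable {N : ℕ} (B : FracAlg (Fin (N+1)))

def vv (t : ℕ) : ℝ := lev B t (ag B t)

def DD (t : ℕ) : ℝ := t - ∑ s ∈ Finset.range t, vv B s

def HH (m : ℕ) : ℝ := ∑ s ∈ Finset.range m, 1/(s+1 : ℝ)

lemma HH_succ (m : ℕ) : HH (m+1) = HH m + 1/((m:ℝ)+1) := by
  simp [HH, Finset.sum_range_succ]

lemma HH_mono {r m : ℕ} (h : r ≤ m) : HH r ≤ HH m := by
  apply Finset.sum_le_sum_of_subset_of_nonneg (Finset.range_subset_range.mpr h)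
  intro i _ _
  positivity

lemma vv_nonneg (hB : ValidFrac B) (t : ℕ) : 0 ≤ vv B t := by
  unfold vv lev
  exact Finset.sum_nonneg fun s _ => hB.1 _ _ _

lemma lev_mono (hB : ValidFrac B) {s t : ℕ} (h : s ≤ t) (a : Fin (N+1)) :
    lev B s a ≤ lev B t a := by
  apply Finset.sum_le_sum_of_subset_of_nonneg (Finset.range_subset_range.mpr (by omega))
  intro i _ _
  exact hB.1 _ _ _

lemma lev_le_one (hB : ValidFrac B) {t : ℕ} (h : t < N+1) (a : Fin (N+1)) :
    lev B t a ≤ 1 := by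
  have h1 : lev B t a ≤ lev B N a := lev_mono B hB (by omega) a
  have h2 : lev B N a = ∑ s ∈ Finset.range (build B (N+1)).length, fracAt B (build B (N+1)) s a := by
    rw [build_len]
    exact Finset.sum_congr rfl fun s hs => by
      rw [frac_eq B (Finset.mem_range.mp hs)]
  exact h1.trans (h2 ▸ hB.2.2.2 (build B (N+1)) a)

lemma vv_le_one (hB : ValidFrac B) {t : ℕ} (h : t < N+1) : vv B t ≤ 1 :=
  lev_le_one B hB h _

lemma ag_injOn {T : ℕ} (hT : T ≤ N+1) :
    ∀ a ∈ Finset.range T, ∀ b ∈ Finset.range T, ag B a = ag B b → a = b := by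
  intro a ha b hb hab
  simp only [Finset.mem_range] at ha hb
  by_contra hne
  rcases Nat.lt_or_ge a b with hl | hl
  · exact ag_inj B hl (by omega) hab
  · exact ag_inj B (by omega : b < a) (by omega) hab.symm

lemma key (hB : ValidFrac B) {t : ℕ} (h : t < N+1) :
    ((N+1-t : ℕ) : ℝ) * vv B t ≤ ((t:ℝ)+1) - ∑ s ∈ Finset.range t, vv B s := by
  have hne := S_nonempty B h
  have hmin := (ag_spec B hne).2
  have h1 : (S B t).card • vv B t ≤ ∑ b ∈ S B t, lev B t b :=
    Finset.card_nsmul_le_sum _ _ _ hmin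
  rw [card_S B t (by omega)] at h1
  have h1' : ((N+1-t : ℕ) : ℝ) * vv B t ≤ ∑ b ∈ S B t, lev B t b := by
    simpa [nsmul_eq_mul] using h1
  have hR : Finset.image (ag B) (Finset.range t) = Finset.univ \ S B t := by
    apply Finset.eq_of_subset_of_card_le
    · intro x hx
      simp only [Finset.mem_image] at hx
      obtain ⟨s, hs, rfl⟩ := hx
      simp only [Finset.mem_sdiff, Finset.mem_univ, true_and]
      exact ag_not_mem B (Finset.mem_range.mp hs)
    · rw [Finset.card_sdiff_of_subset (Finset.subset_univ _),
        Finset.card_image_of_injOn (ag_injOn B (by omega))]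
      rw [card_S B t (by omega), Finset.card_univ, Fintype.card_fin, Finset.card_range]
      omega
  have hsplit : (∑ b ∈ Finset.univ \ S B t, lev B t b) + ∑ b ∈ S B t, lev B t b
      = ∑ b, lev B t b := Finset.sum_sdiff (Finset.subset_univ _)
  have himg : ∑ b ∈ Finset.univ \ S B t, lev B t b = ∑ s ∈ Finset.range t, lev B t (ag B s) := by
    rw [← hR, Finset.sum_image (ag_injOn B (by omega))]
  have hlow : ∑ s ∈ Finset.range t, vv B s ≤ ∑ s ∈ Finset.range t, lev B t (ag B s) := by
    apply Finset.sum_le_sum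
    intro s hs
    exact lev_mono B hB (by simp at hs; omega) _
  have htop : ∑ b, lev B t b ≤ (t:ℝ)+1 := by
    have : ∑ b, lev B t b = ∑ s ∈ Finset.range (t+1), ∑ b, B (build B s) (S B s) b := by
      rw [Finset.sum_comm]
      rfl
    rw [this]
    calc ∑ s ∈ Finset.range (t+1), ∑ b, B (build B s) (S B s) b
        ≤ ∑ _s ∈ Finset.range (t+1), (1:ℝ) := Finset.sum_le_sum fun s _ => hB.2.2.1 _ _
      _ = (t:ℝ)+1 := by simp
  linarith

lemma DD_rec (t : ℕ) : DD B (t+1) = DD B t + 1 - vv B t := by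
  unfold DD
  rw [Finset.sum_range_succ]
  push_cast
  ring

lemma DD_mono (hB : ValidFrac B) {s : ℕ} : ∀ {t : ℕ}, s ≤ t → t ≤ N+1 → DD B s ≤ DD B t := by
  intro t
  induction t with
  | zero => intro h _; rw [Nat.le_zero.mp h]
  | succ t ih =>
    intro h hN
    rcases Nat.lt_succ_iff_lt_or_eq.mp (Nat.lt_succ_of_le h) with h' | h'
    · have h2 := ih (by omega) (by omega)
      have hv := vv_le_one B hB (show t < N+1 by omega)
      rw [DD_rec]
      linarith
    · subst h'; exact le_rfl

lemma DD_lower (hB : ValidFrac B) : ∀ t ≤ N+1,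
    (HH (N+1) - HH (N+1-t)) * ((N+1-t : ℕ) : ℝ) ≤ DD B t := by
  intro t
  induction t with
  | zero => intro _; simp [DD]
  | succ t ih =>
    intro h
    have ht : t < N+1 := by omega
    have IH := ih (by omega)
    set c : ℕ := N+1-t with hc
    have hc1 : 1 ≤ c := by omega
    have hcsucc : N+1-(t+1) = c - 1 := by omega
    have hcpos : (0:ℝ) < (c:ℝ) := by exact_mod_cast Nat.pos_of_ne_zero (by omega)
    have hHHm : HH c ≤ HH (N+1) := HH_mono (by omega)
    have hDpos : 0 ≤ DD B t :=
      le_trans (mul_nonneg (by linarith) (Nat.cast_nonneg _)) IH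
    have hkey := key B hB ht
    have hkey' : (c:ℝ) * vv B t ≤ DD B t + 1 := by
      unfold DD at *
      push_cast at *
      linarith
    have hrec : DD B (t+1) = DD B t + 1 - vv B t := DD_rec B t
    have h2 : (DD B t + 1) * ((c:ℝ)-1)/c ≤ DD B (t+1) := by
      rw [hrec]
      have he : (DD B t + 1) * ((c:ℝ)-1)/c = (DD B t + 1) - (DD B t + 1)/c := by
        field_simp
      rw [he]
      have hvle : vv B t ≤ (DD B t + 1)/(c:ℝ) := by
        rw [le_div_iff₀ hcpos]
        linarith [hkey']
      linarith
    have hHH : HH c = HH (c-1) + 1/((c:ℝ)-1+1) := by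
      have he : c = (c-1)+1 := by omega
      conv_lhs => rw [he]
      rw [HH_succ]
      congr 1
      rw [Nat.cast_sub hc1]
      norm_num
    have e1 : (HH (N+1) - HH (c-1)) * (((c-1:ℕ)):ℝ) = ((HH (N+1) - HH c) * c + 1) * ((c:ℝ)-1)/c := by
      rw [hHH, Nat.cast_sub hc1]
      push_cast
      rw [sub_add_cancel]
      field_simp
      ring
    have hfrac : (0:ℝ) ≤ ((c:ℝ)-1)/c := by
      apply div_nonneg _ (le_of_lt hcpos)
      have : (1:ℝ) ≤ (c:ℝ) := by exact_mod_cast hc1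
      linarith
    have e2 : ((HH (N+1) - HH c) * c + 1) * ((c:ℝ)-1)/c ≤ (DD B t + 1) * ((c:ℝ)-1)/c := by
      rw [mul_div_assoc, mul_div_assoc]
      exact mul_le_mul_of_nonneg_right (by linarith [IH]) hfrac
    rw [hcsucc]
    calc (HH (N+1) - HH (c-1)) * (((c-1:ℕ)):ℝ)
        = ((HH (N+1) - HH c) * c + 1) * ((c:ℝ)-1)/c := e1
      _ ≤ (DD B t + 1) * ((c:ℝ)-1)/c := e2
      _ ≤ DD B (t+1) := h2

lemma welfare_eq (hB : ValidFrac B) :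
    ∑ t ∈ Finset.range (N+1), ∑ a, fracAt B (build B (N+1)) t a
      = ∑ t ∈ Finset.range (N+1), vv B t := by
  have htot : ∀ t ∈ Finset.range (N+1),
      (∑ s ∈ Finset.range (N+1), fracAt B (build B (N+1)) s (ag B t)) = vv B t := by
    intro t ht
    rw [Finset.mem_range] at ht
    have h1 : ∑ s ∈ Finset.range (N+1), fracAt B (build B (N+1)) s (ag B t)
        = ∑ s ∈ Finset.range (N+1), B (build B s) (S B s) (ag B t) :=
      Finset.sum_congr rfl fun s hs => by rw [frac_eq B (Finset.mem_range.mp hs)]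
    rw [h1]
    unfold vv lev
    rw [← Finset.sum_subset (Finset.range_subset_range.mpr (show t+1 ≤ N+1 by omega))]
    intro s hs hns
    simp only [Finset.mem_range] at hs hns
    by_contra hne
    exact ag_not_mem B (show t < s by omega) (hB.2.1 _ _ _ hne)
  have huniv : Finset.image (ag B) (Finset.range (N+1)) = Finset.univ := by
    apply Finset.eq_of_subset_of_card_le (Finset.subset_univ _)
    rw [Finset.card_image_of_injOn (ag_injOn B le_rfl)]
    simp
  rw [Finset.sum_comm]
  calc ∑ a, ∑ t ∈ Finset.range (N+1), fracAt B (build B (N+1)) t a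
      = ∑ a ∈ Finset.image (ag B) (Finset.range (N+1)),
          ∑ t ∈ Finset.range (N+1), fracAt B (build B (N+1)) t a := by rw [huniv]
    _ = ∑ s ∈ Finset.range (N+1), ∑ t ∈ Finset.range (N+1), fracAt B (build B (N+1)) t (ag B s) :=
        Finset.sum_image (ag_injOn B le_rfl)
    _ = ∑ t ∈ Finset.range (N+1), vv B t := Finset.sum_congr rfl htot

lemma log_le_HH (r : ℕ) : ∀ (d : ℕ), Real.log (((r:ℝ)+d+1)/((r:ℝ)+1)) ≤ HH (r+d) - HH r := by
  intro d
  induction d with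
  | zero =>
    norm_num
  | succ d ih =>
    have hsplit : ((r:ℝ)+(d+1)+1)/((r:ℝ)+1)
        = (((r:ℝ)+d+2)/((r:ℝ)+d+1)) * (((r:ℝ)+d+1)/((r:ℝ)+1)) := by
      rw [div_mul_div_comm]
      rw [div_eq_div_iff (by positivity) (by positivity)]
      ring
    push_cast
    rw [hsplit, Real.log_mul (by positivity) (by positivity)]
    have h1 : Real.log (((r:ℝ)+d+2)/((r:ℝ)+d+1)) ≤ 1/((r:ℝ)+d+1) := by
      have h2 := Real.log_le_sub_one_of_pos (show (0:ℝ) < ((r:ℝ)+d+2)/((r:ℝ)+d+1) by positivity)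
      have he : ((r:ℝ)+d+2)/((r:ℝ)+d+1) - 1 = 1/((r:ℝ)+d+1) := by
        field_simp
        norm_num
      linarith [he ▸ h2]
    have hH : HH (r+(d+1)) = HH (r+d) + 1/(((r:ℝ)+d)+1) := by
      rw [show r+(d+1) = (r+d)+1 from rfl, HH_succ]
      push_cast
      ring_nf
    rw [hH]
    have : 1/(((r:ℝ)+d)+1) = 1/((r:ℝ)+d+1) := by ring_nf
    push_cast at ih ⊢
    linarith [ih, h1]

end Analysis

section PropBound

variable {N : ℕ} (B : FracAlg (Fin (N+1)))

lemma Vstar_bddAbove (L : List (Finset (Fin (N+1)))) (C : Finset (Fin (N+1))) (y : ℕ → ℝ) :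
    ∀ v ∈ {v : ℝ | ∃ x : ℕ → Fin (N+1) → ℝ,
      (∀ t a, 0 ≤ x t a) ∧
      (∀ t a, x t a ≠ 0 → a ∈ C ∧ a ∈ likersAt L t ∧ t < L.length) ∧
      (∀ t, ∑ a ∈ C, x t a ≤ y t) ∧
      (∀ a, ∑ t ∈ Finset.range L.length, x t a ≤ 1) ∧
      v = ∑ t ∈ Finset.range L.length, ∑ a ∈ C, x t a}, v ≤ ((N+1:ℕ):ℝ) := by
  rintro v ⟨x, hx0, -, -, hcap, rfl⟩
  rw [Finset.sum_comm]
  calc ∑ a ∈ C, ∑ t ∈ Finset.range L.length, x t a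
      ≤ ∑ _a ∈ C, (1:ℝ) := Finset.sum_le_sum (fun a _ => hcap a)
    _ = (C.card : ℝ) := by simp
    _ ≤ ((N+1:ℕ):ℝ) := by
        have h1 := Finset.card_le_univ C
        simp only [Fintype.card_fin] at h1
        exact_mod_cast h1

lemma Vstar_le (L : List (Finset (Fin (N+1)))) (C : Finset (Fin (N+1))) (y : ℕ → ℝ) :
    VstarFrac L C y ≤ ((N+1:ℕ):ℝ) := by
  apply Real.sSup_le (Vstar_bddAbove L C y)
  positivity

lemma prop_ge (hB : ValidFrac B) :
    ((N+1:ℕ):ℝ) ≤ propShare (fun _ : Fin (N+1) => (0 : Fin 1)) (build B (N+1)) 0 := by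
  set L := build B (N+1) with hL
  have hLlen : L.length = N+1 := build_len B (N+1)
  set C := classAgents (fun _ : Fin (N+1) => (0:Fin 1)) (0 : Fin 1) with hC
  have hCu : C = Finset.univ := by
    rw [hC]
    unfold classAgents
    apply Finset.filter_true_of_mem
    intro a _
    rfl
  set x : ℕ → Fin (N+1) → ℝ := fun t a => if t < N+1 ∧ a = ag B t then 1 else 0 with hx
  have hx0 : ∀ t a, 0 ≤ x t a := by
    intro t a
    rw [hx]
    dsimp only
    split <;> norm_num
  have hxsupp : ∀ t a, x t a ≠ 0 → a ∈ likersAt L t ∧ t < L.length := by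
    intro t a hne
    rw [hx] at hne
    dsimp only at hne
    by_cases h : t < N+1 ∧ a = ag B t
    · obtain ⟨ht, ha⟩ := h
      subst ha
      refine ⟨?_, by rw [hLlen]; exact ht⟩
      rw [hL, likers_build B ht]
      exact ag_mem B ht
    · rw [if_neg h] at hne
      exact absurd rfl hne
  have hxitem1 : ∀ t, t < N+1 → (∑ a, x t a) = 1 := by
    intro t ht
    rw [hx]
    dsimp only
    simp only [ht, true_and]
    rw [Finset.sum_ite_eq' Finset.univ (ag B t) (fun _ => (1:ℝ))]
    simp
  have hxitem : ∀ t, (∑ a, x t a) ≤ 1 := by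
    intro t
    by_cases ht : t < N+1
    · rw [hxitem1 t ht]
    · rw [hx]; dsimp only; simp [ht]
  have hxcap : ∀ a, (∑ t ∈ Finset.range L.length, x t a) ≤ 1 := by
    intro a
    rw [hLlen]
    have he : ∀ t ∈ Finset.range (N+1), x t a = if a = ag B t then (1:ℝ) else 0 := by
      intro t ht
      rw [hx]
      dsimp only
      simp [Finset.mem_range.mp ht]
    rw [Finset.sum_congr rfl he, Finset.sum_boole]
    have hc1 : ((Finset.range (N+1)).filter (fun t => a = ag B t)).card ≤ 1 := by
      apply Finset.card_le_one.mpr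
      intro t1 h1 t2 h2
      simp only [Finset.mem_filter, Finset.mem_range] at h1 h2
      exact ag_injOn B le_rfl t1 (Finset.mem_range.mpr h1.1) t2 (Finset.mem_range.mpr h2.1)
        (h1.2 ▸ h2.2 ▸ rfl)
    exact_mod_cast hc1
  have hVge : ((N+1:ℕ):ℝ) ≤ VstarFrac L C (fun t => ∑ a ∈ C, x t a) := by
    unfold VstarFrac
    apply le_csSup ⟨((N+1:ℕ):ℝ), fun v hv => Vstar_bddAbove L C _ v hv⟩
    refine ⟨x, hx0, ?_, fun t => le_rfl, hxcap, ?_⟩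
    · intro t a hne
      exact ⟨hCu ▸ Finset.mem_univ a, (hxsupp t a hne).1, (hxsupp t a hne).2⟩
    · rw [hLlen, hCu]
      rw [Finset.sum_congr rfl (fun t ht => hxitem1 t (Finset.mem_range.mp ht))]
      simp
  unfold propShare
  apply le_csSup
  · refine ⟨((N+1:ℕ):ℝ), fun v hv => ?_⟩
    obtain ⟨x', -, -, -, -, hj⟩ := hv
    exact le_trans (hj 0) (Vstar_le L _ _)
  · refine ⟨x, hx0, hxsupp, hxitem, hxcap, fun j => ?_⟩
    rw [Subsingleton.elim j 0]
    exact hVge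

end PropBound


theorem stmt_12 (α : ℝ) (hα : α > 1 - 1 / Real.exp 1) :
    ¬ ∃ Alg : ∀ (n k : ℕ), (Fin n → Fin (k + 1)) → FracAlg (Fin n),
      ∀ (n k : ℕ) (classOf : Fin n → Fin (k + 1)),
        ValidFrac (Alg n k classOf) ∧ IsCPROPfrac classOf α (Alg n k classOf) := by
  rintro ⟨Alg, hAlg⟩
  have hE1 : (1:ℝ) < Real.exp 1 := by
    have := Real.add_one_le_exp (1:ℝ)
    linarith
  have hE2 : (2:ℝ) ≤ Real.exp 1 := by
    have := Real.add_one_le_exp (1:ℝ)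
    linarith
  have hEpos : (0:ℝ) < Real.exp 1 := by linarith
  set E := Real.exp 1 with hEdef
  set M : ℝ := max (1-α) 0 with hMdef
  have hM0 : 0 ≤ M := le_max_right _ _
  have hM1 : 1 - α ≤ M := le_max_left _ _
  have hMlt : E * M < 1 := by
    rcases max_cases (1-α) 0 with ⟨hm, hge⟩ | ⟨hm, hlt⟩
    · rw [hMdef, hm]
      have h1 : 1 - α < 1/E := by linarith
      calc E*(1-α) < E*(1/E) := mul_lt_mul_of_pos_left h1 hEpos
        _ = 1 := by field_simp
    · rw [hMdef, hm]
      simp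
  set θ : ℝ := 1 - E*M with hθdef
  have hθpos : 0 < θ := by linarith
  set N : ℕ := ⌈(2*E)/θ⌉₊ with hNdef
  have hn : (2*E)/θ ≤ (N:ℝ) := by
    rw [hNdef]
    exact_mod_cast Nat.le_ceil _
  have hθn : 2*E ≤ θ * ((N:ℝ)+1) := by
    rw [div_le_iff₀ hθpos] at hn
    nlinarith [hθpos]
  obtain ⟨hv, hp⟩ := hAlg (N+1) 0 (fun _ => 0)
  set B : FracAlg (Fin (N+1)) := Alg (N+1) 0 (fun _ => 0) with hBdef
  set L := build B (N+1) with hLdef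
  have hLlen : L.length = N+1 := build_len B (N+1)
  have hprop := prop_ge B hv
  have hcprop := hp L 0
  have hCV : classValue (fun _ : Fin (N+1) => (0:Fin 1)) B L 0
      = ∑ t ∈ Finset.range (N+1), vv B t := by
    unfold classValue
    rw [hLlen]
    have hCu : classAgents (fun _ : Fin (N+1) => (0:Fin 1)) (0 : Fin 1) = Finset.univ := by
      unfold classAgents
      apply Finset.filter_true_of_mem
      intro a _
      rfl
    rw [hCu, hLdef]
    exact welfare_eq B hv
  have hαpos : 0 < α := by
    have : 1/E < 1 := by rw [div_lt_one hEpos]; exact hE1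
    linarith
  have hW : α * ((N+1:ℕ):ℝ) ≤ ∑ t ∈ Finset.range (N+1), vv B t := by
    have h1 := mul_le_mul_of_nonneg_left hprop (le_of_lt hαpos)
    rw [← hCV]
    exact le_trans h1 hcprop
  set r : ℕ := ⌊M * ((N:ℝ)+1)⌋₊ + 1 with hrdef
  have hrlow : (1-α) * ((N:ℝ)+1) < (r:ℝ) := by
    have h1 : M * ((N:ℝ)+1) < (⌊M * ((N:ℝ)+1)⌋₊ : ℝ) + 1 := Nat.lt_floor_add_one _
    have h2 : (1-α) * ((N:ℝ)+1) ≤ M * ((N:ℝ)+1) :=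
      mul_le_mul_of_nonneg_right hM1 (by positivity)
    rw [hrdef]
    push_cast
    linarith
  have hrup : (r:ℝ) ≤ M * ((N:ℝ)+1) + 1 := by
    have h1 : (⌊M * ((N:ℝ)+1)⌋₊ : ℝ) ≤ M * ((N:ℝ)+1) := Nat.floor_le (by positivity)
    rw [hrdef]
    push_cast
    linarith
  have hEr : E * ((r:ℝ)+1) ≤ ((N:ℝ)+1) + 1 := by
    have h1 : E * ((r:ℝ)+1) ≤ E * (M*((N:ℝ)+1) + 2) :=
      mul_le_mul_of_nonneg_left (by linarith) (le_of_lt hEpos)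
    have h2 : E * (M*((N:ℝ)+1) + 2) = (1-θ)*((N:ℝ)+1) + 2*E := by
      rw [hθdef]; ring
    linarith [hθn]
  have hrN : r ≤ N+1 := by
    have h1 : 2 * ((r:ℝ)+1) ≤ E * ((r:ℝ)+1) :=
      mul_le_mul_of_nonneg_right hE2 (by positivity)
    have hN0 : (0:ℝ) ≤ (N:ℝ) := Nat.cast_nonneg N
    have h2 : (r:ℝ) ≤ (N:ℝ)+1 := by linarith
    exact_mod_cast h2
  have hHH : (1:ℝ) ≤ HH (N+1) - HH r := by
    have hd := log_le_HH r ((N+1) - r)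
    have hrd : r + ((N+1) - r) = N+1 := by omega
    rw [hrd] at hd
    have hcast : ((r:ℝ) + (((N+1) - r:ℕ):ℝ) + 1) = (N:ℝ)+2 := by
      rw [Nat.cast_sub hrN]
      push_cast
      ring
    rw [hcast] at hd
    have hlog : (1:ℝ) ≤ Real.log (((N:ℝ)+2)/((r:ℝ)+1)) := by
      rw [Real.le_log_iff_exp_le (by positivity), le_div_iff₀ (by positivity), ← hEdef]
      linarith [hEr]
    linarith [hd, hlog]
  have hDl := DD_lower B hv ((N+1) - r) (by omega)
  have hrr : N+1-((N+1)-r) = r := by omega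
  rw [hrr] at hDl
  have hDm : DD B ((N+1)-r) ≤ DD B (N+1) := DD_mono B hv (by omega) le_rfl
  have hr0 : (0:ℝ) ≤ (r:ℝ) := Nat.cast_nonneg r
  have hDr : (r:ℝ) ≤ DD B (N+1) := by
    have h1 : (1:ℝ) * (r:ℝ) ≤ (HH (N+1) - HH r) * (r:ℝ) :=
      mul_le_mul_of_nonneg_right hHH hr0
    linarith [hDl, hDm, h1]
  have hDn : DD B (N+1) = ((N+1:ℕ):ℝ) - ∑ t ∈ Finset.range (N+1), vv B t := by
    unfold DD
    push_cast
    ring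
  have hfin : DD B (N+1) ≤ (1-α) * ((N:ℝ)+1) := by
    rw [hDn]
    push_cast
    push_cast at hW
    linarith [hW]
  linarith [hrlow, hDr, hfin]

end
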